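/- Let A be a regular invertible d×d matrix with Jordan decomposition A = P^{-1}ΛP and suppose z is a vector such that v = Pz has min_i |v_i| ≥ ψ > 0. Then the matrix F = Σ_{i=1}^{T} A^{-i+1} z zᵀ (A^{-i+1})ᵀ satisfies F ⪰ (φ_min(A)² ψ² / σ_max(P)²) I, where φ_min(A)² = inf_{v : min_i|v_i| ≥ 1} σ_min(Σ_{i=1}^T Λ^{-i+1} v v* (Λ^{-i+1})*) > 0. -/

import Mathlib

open Matrix
open scoped ComplexOrder

section AuxNorm
open scoped Matrix.Norms.L2Operator

set_option maxHeartbeats 1000000 in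
private lemma stmt18_opNorm_le {d : ℕ} {P : Matrix (Fin d) (Fin d) ℂ} {σ : ℝ} (hσ : 0 ≤ σ)
    (h : ∀ x : Fin d → ℂ, Real.sqrt (∑ i, ‖(P *ᵥ x) i‖ ^ 2) ≤ σ * Real.sqrt (∑ i, ‖x i‖ ^ 2)) :
    ‖P‖ ≤ σ := by
  rw [Matrix.l2_opNorm_def]
  refine ContinuousLinearMap.opNorm_le_bound _ hσ fun x => ?_
  have := h ((WithLp.equiv 2 _) x)
  simp only [EuclideanSpace.norm_eq]
  convert this using 3 <;> rfl

set_option maxHeartbeats 1000000 in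
private lemma stmt18_conjT_bound {d : ℕ} {P : Matrix (Fin d) (Fin d) ℂ} {σ : ℝ} (hσ : 0 ≤ σ)
    (h : ∀ x : Fin d → ℂ, Real.sqrt (∑ i, ‖(P *ᵥ x) i‖ ^ 2) ≤ σ * Real.sqrt (∑ i, ‖x i‖ ^ 2))
    (y : Fin d → ℂ) :
    Real.sqrt (∑ i, ‖(Pᴴ *ᵥ y) i‖ ^ 2) ≤ σ * Real.sqrt (∑ i, ‖y i‖ ^ 2) := by
  have hn : ‖Pᴴ‖ ≤ σ := (Matrix.l2_opNorm_conjTranspose P).le.trans (stmt18_opNorm_le hσ h)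
  have := Matrix.l2_opNorm_mulVec Pᴴ ((WithLp.equiv 2 _).symm y)
  have h2 : ‖(EuclideanSpace.equiv (Fin d) ℂ).symm (Pᴴ *ᵥ (WithLp.equiv 2 _).symm y)‖
      = Real.sqrt (∑ i, ‖(Pᴴ *ᵥ y) i‖ ^ 2) := by
    simp only [EuclideanSpace.norm_eq]; rfl
  have h3 : ‖((WithLp.equiv 2 ((Fin d) → ℂ)).symm y : EuclideanSpace ℂ (Fin d))‖
      = Real.sqrt (∑ i, ‖y i‖ ^ 2) := by
    simp only [EuclideanSpace.norm_eq]; rfl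
  rw [h2, h3] at this
  exact this.trans (mul_le_mul_of_nonneg_right hn (Real.sqrt_nonneg _))

end AuxNorm

private lemma stmt18_conjT_sq {d : ℕ} {P : Matrix (Fin d) (Fin d) ℂ} {σ : ℝ} (hσ : 0 ≤ σ)
    (h : ∀ x : Fin d → ℂ, Real.sqrt (∑ i, ‖(P *ᵥ x) i‖ ^ 2) ≤ σ * Real.sqrt (∑ i, ‖x i‖ ^ 2))
    (y : Fin d → ℂ) :
    (∑ i, ‖(Pᴴ *ᵥ y) i‖ ^ 2) ≤ σ ^ 2 * ∑ i, ‖y i‖ ^ 2 := by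
  have key := stmt18_conjT_bound hσ h y
  have h1 : (0:ℝ) ≤ ∑ i, ‖(Pᴴ *ᵥ y) i‖ ^ 2 := Finset.sum_nonneg fun i _ => sq_nonneg _
  have h2 : (0:ℝ) ≤ ∑ i, ‖y i‖ ^ 2 := Finset.sum_nonneg fun i _ => sq_nonneg _
  calc (∑ i, ‖(Pᴴ *ᵥ y) i‖ ^ 2) = Real.sqrt (∑ i, ‖(Pᴴ *ᵥ y) i‖ ^ 2) ^ 2 := by
        rw [Real.sq_sqrt h1]
    _ ≤ (σ * Real.sqrt (∑ i, ‖y i‖ ^ 2)) ^ 2 := by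
        exact pow_le_pow_left₀ (Real.sqrt_nonneg _) key 2
    _ = σ ^ 2 * ∑ i, ‖y i‖ ^ 2 := by rw [mul_pow, Real.sq_sqrt h2]

/-- let `A` be a regular invertible matrix with Jordan decomposition
`A = P⁻¹ Λ P`, let `φ` be a (nonnegative) lower bound as in the definition of `φ_min(A)`
(i.e. `φ² ≤ σ_min(Σ_{i=1}^T Λ^{-i+1} v v* (Λ^{-i+1})*)` for every `v` in the outbox
`min_i |v_i| ≥ 1`), let `σ ≥ σ_max(P)` and suppose `z` satisfies `min_i |(Pz)_i| ≥ ψ > 0`.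
Then `F = Σ_{i=1}^T A^{-i+1} z z* (A^{-i+1})* ⪰ (φ² ψ² / σ²) I`. -/
theorem stmt18 {d : ℕ} (T : ℕ) (hT : d ≤ T)
    (A P Λ : Matrix (Fin d) (Fin d) ℂ)
    (hA : IsUnit A.det) (hP : IsUnit P.det)
    (hdecomp : A = P⁻¹ * Λ * P)
    (hreg : minpoly ℂ A = A.charpoly)
    (φ ψ σ : ℝ) (hφ : 0 ≤ φ) (hψ : 0 < ψ) (hσ : 0 < σ)
    (hφmin : ∀ v : Fin d → ℂ, (∀ i, 1 ≤ ‖v i‖) → ∀ x : Fin d → ℂ,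
        φ ^ 2 * (∑ j, ‖x j‖ ^ 2) ≤
          (star x ⬝ᵥ ((∑ i ∈ Finset.range T,
              (Λ⁻¹) ^ i * vecMulVec v (star v) * ((Λ⁻¹) ^ i)ᴴ) *ᵥ x)).re)
    (hσmax : ∀ x : Fin d → ℂ,
        Real.sqrt (∑ i, ‖(P *ᵥ x) i‖ ^ 2) ≤ σ * Real.sqrt (∑ i, ‖x i‖ ^ 2))
    (z : Fin d → ℂ) (hz : ∀ i, ψ ≤ ‖(P *ᵥ z) i‖) :
    ((∑ i ∈ Finset.range T, (A⁻¹) ^ i * vecMulVec z (star z) * ((A⁻¹) ^ i)ᴴ)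
      - ((φ ^ 2 * ψ ^ 2 / σ ^ 2 : ℝ) : ℂ) • 1).PosSemidef := by
  classical
  have hψ0 : (ψ : ℂ) ≠ 0 := by exact_mod_cast hψ.ne'
  -- Λ invertible
  have hdet : A.det = Λ.det := by
    rw [hdecomp, Matrix.det_mul, Matrix.det_mul, Matrix.det_nonsing_inv]
    field_simp
    rw [mul_comm, ← mul_assoc, Ring.mul_inverse_cancel _ hP, one_mul]
  have hΛ : IsUnit Λ.det := hdet ▸ hA
  have hPPinv : P * P⁻¹ = 1 := Matrix.mul_nonsing_inv P hP
  have hPinvP : P⁻¹ * P = 1 := Matrix.nonsing_inv_mul P hP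
  have hAinv : A⁻¹ = P⁻¹ * Λ⁻¹ * P := by
    rw [hdecomp, Matrix.mul_inv_rev, Matrix.mul_inv_rev,
      Matrix.nonsing_inv_nonsing_inv P hP, mul_assoc]
  have hpow : ∀ i : ℕ, (A⁻¹) ^ i = P⁻¹ * (Λ⁻¹) ^ i * P := by
    intro i
    induction i with
    | zero => simp [hPinvP]
    | succ n ih =>
        rw [pow_succ, ih, hAinv, pow_succ]
        calc P⁻¹ * (Λ⁻¹) ^ n * P * (P⁻¹ * Λ⁻¹ * P)
            = P⁻¹ * (Λ⁻¹) ^ n * (P * P⁻¹) * Λ⁻¹ * P := by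
              simp only [mul_assoc]
          _ = P⁻¹ * ((Λ⁻¹) ^ n * Λ⁻¹) * P := by
              rw [hPPinv]; simp only [mul_assoc, mul_one, one_mul]
  set u : Fin d → ℂ := P *ᵥ z with hu
  set v : Fin d → ℂ := (ψ : ℂ)⁻¹ • u with hv
  have huv : u = (ψ : ℂ) • v := by
    rw [hv, smul_smul, mul_inv_cancel₀ hψ0, one_smul]
  have hv1 : ∀ i, 1 ≤ ‖v i‖ := by
    intro i
    have h1 : ‖v i‖ = ψ⁻¹ * ‖u i‖ := by
      simp [hv, norm_smul, abs_of_pos hψ]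
    rw [h1, ← inv_mul_cancel₀ hψ.ne']
    exact mul_le_mul_of_nonneg_left (hz i) (inv_nonneg.mpr hψ.le)
  -- P z z* Pᴴ = u u*
  have hPzz : P * vecMulVec z (star z) * Pᴴ = vecMulVec u (star u) := by
    ext i j
    simp only [Matrix.mul_apply, vecMulVec_apply, conjTranspose_apply, hu, mulVec,
      dotProduct, Pi.star_apply, star_sum, star_mul']
    rw [Finset.mul_sum]
    refine Finset.sum_congr rfl fun l _ => ?_
    rw [Finset.sum_mul, Finset.sum_mul]
    refine Finset.sum_congr rfl fun k _ => ?_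
    ring
  have huvv : vecMulVec u (star u) = ((ψ ^ 2 : ℝ) : ℂ) • vecMulVec v (star v) := by
    ext i j
    simp only [huv, vecMulVec_apply, Pi.star_apply, Pi.smul_apply, smul_eq_mul, star_mul',
      Matrix.smul_apply, Complex.star_def, Complex.conj_ofReal]
    push_cast
    ring
  set S : Matrix (Fin d) (Fin d) ℂ :=
    ∑ i ∈ Finset.range T, (Λ⁻¹) ^ i * vecMulVec v (star v) * ((Λ⁻¹) ^ i)ᴴ with hS
  have hF : (∑ i ∈ Finset.range T, (A⁻¹) ^ i * vecMulVec z (star z) * ((A⁻¹) ^ i)ᴴ)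
      = P⁻¹ * (((ψ ^ 2 : ℝ) : ℂ) • S) * (P⁻¹)ᴴ := by
    rw [hS, Finset.smul_sum, Finset.mul_sum, Finset.sum_mul]
    refine Finset.sum_congr rfl fun i _ => ?_
    rw [hpow i, conjTranspose_mul, conjTranspose_mul]
    have : (Λ⁻¹) ^ i * vecMulVec u (star u) * ((Λ⁻¹) ^ i)ᴴ
        = ((ψ ^ 2 : ℝ) : ℂ) • ((Λ⁻¹) ^ i * vecMulVec v (star v) * ((Λ⁻¹) ^ i)ᴴ) := by
      rw [huvv, Matrix.mul_smul, Matrix.smul_mul]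
    calc P⁻¹ * (Λ⁻¹) ^ i * P * vecMulVec z (star z) * (Pᴴ * (((Λ⁻¹) ^ i)ᴴ * (P⁻¹)ᴴ))
        = P⁻¹ * ((Λ⁻¹) ^ i * (P * vecMulVec z (star z) * Pᴴ) * ((Λ⁻¹) ^ i)ᴴ) * (P⁻¹)ᴴ := by
          simp only [mul_assoc]
      _ = P⁻¹ * (((ψ ^ 2 : ℝ) : ℂ) • ((Λ⁻¹) ^ i * vecMulVec v (star v) * ((Λ⁻¹) ^ i)ᴴ)) * (P⁻¹)ᴴ := by
          rw [hPzz, this]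
  -- Hermitian facts
  have hvvH : (vecMulVec v (star v))ᴴ = vecMulVec v (star v) := by
    ext i j
    simp only [conjTranspose_apply, vecMulVec_apply, Pi.star_apply, star_mul', star_star]
    ring
  have hSH : Sᴴ = S := by
    rw [hS, conjTranspose_sum]
    refine Finset.sum_congr rfl fun i _ => ?_
    rw [conjTranspose_mul, conjTranspose_mul, hvvH, conjTranspose_conjTranspose, mul_assoc]
  set c : ℝ := φ ^ 2 * ψ ^ 2 / σ ^ 2 with hcdef
  set F : Matrix (Fin d) (Fin d) ℂ :=
    ∑ i ∈ Finset.range T, (A⁻¹) ^ i * vecMulVec z (star z) * ((A⁻¹) ^ i)ᴴ with hFdef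
  have hFH : Fᴴ = F := by
    rw [hF, conjTranspose_mul, conjTranspose_mul, conjTranspose_smul, hSH,
      conjTranspose_conjTranspose]
    have : star (((ψ ^ 2 : ℝ) : ℂ)) = ((ψ ^ 2 : ℝ) : ℂ) := by
      simp [Complex.star_def, Complex.conj_ofReal]
    rw [this, mul_assoc]
  have hMH : (F - ((c : ℝ) : ℂ) • 1)ᴴ = F - ((c : ℝ) : ℂ) • 1 := by
    rw [conjTranspose_sub, hFH, conjTranspose_smul, conjTranspose_one,
      Complex.star_def, Complex.conj_ofReal]
  rw [Matrix.posSemidef_iff_dotProduct_mulVec]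
  refine ⟨hMH, fun x => ?_⟩
  set y : Fin d → ℂ := (P⁻¹)ᴴ *ᵥ x with hy
  -- quadratic form of F
  have hq : star x ⬝ᵥ (F *ᵥ x) = ((ψ ^ 2 : ℝ) : ℂ) * (star y ⬝ᵥ (S *ᵥ y)) := by
    rw [hF, ← mulVec_mulVec, ← mulVec_mulVec, Matrix.dotProduct_mulVec,
      show star x ᵥ* P⁻¹ = star y by rw [hy, star_mulVec, conjTranspose_conjTranspose],
      smul_mulVec, dotProduct_smul, smul_eq_mul]
  have hxy : x = Pᴴ *ᵥ y := by
    rw [hy, mulVec_mulVec, ← conjTranspose_mul, hPinvP, conjTranspose_one, one_mulVec]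
  have hbound : (∑ i, ‖x i‖ ^ 2) ≤ σ ^ 2 * ∑ i, ‖y i‖ ^ 2 := by
    have := stmt18_conjT_sq hσ.le hσmax y
    rwa [← hxy] at this
  have hlower := hφmin v hv1 y
  -- star x ⬝ᵥ x
  have hxx : star x ⬝ᵥ x = (((∑ i, ‖x i‖ ^ 2 : ℝ)) : ℂ) := by
    simp only [dotProduct, Pi.star_apply, Complex.star_def]
    push_cast
    refine Finset.sum_congr rfl fun i _ => ?_
    rw [mul_comm, Complex.mul_conj]
    rw [Complex.normSq_eq_norm_sq]
    norm_cast
  rw [sub_mulVec, dotProduct_sub, smul_mulVec, one_mulVec, dotProduct_smul,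
    smul_eq_mul, hxx, hq]
  rw [Complex.le_def]
  constructor
  · simp only [Complex.sub_re, Complex.zero_re, Complex.re_ofReal_mul, Complex.ofReal_re]
    rw [sub_nonneg]
    have h1 : c * (∑ i, ‖x i‖ ^ 2) ≤ c * (σ ^ 2 * ∑ i, ‖y i‖ ^ 2) := by
      apply mul_le_mul_of_nonneg_left hbound
      exact div_nonneg (mul_nonneg (sq_nonneg _) (sq_nonneg _)) (sq_nonneg _)
    have h2 : c * (σ ^ 2 * ∑ i, ‖y i‖ ^ 2) = ψ ^ 2 * (φ ^ 2 * ∑ i, ‖y i‖ ^ 2) := by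
      rw [hcdef]
      field_simp
    have h3 : ψ ^ 2 * (φ ^ 2 * ∑ i, ‖y i‖ ^ 2) ≤ ψ ^ 2 * (star y ⬝ᵥ (S *ᵥ y)).re :=
      mul_le_mul_of_nonneg_left hlower (sq_nonneg _)
    linarith [h1, h2, h3]
  · -- imaginary part
    have hself : star (star y ⬝ᵥ (S *ᵥ y)) = star y ⬝ᵥ (S *ᵥ y) := by
      rw [← star_dotProduct, star_mulVec, hSH, ← Matrix.dotProduct_mulVec]
    have him : (star y ⬝ᵥ (S *ᵥ y)).im = 0 := by
      have := congrArg Complex.im hself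
      simp only [Complex.star_def, Complex.conj_im] at this
      linarith
    simp only [Complex.zero_im, Complex.sub_im, Complex.im_ofReal_mul, him, mul_zero,
      Complex.ofReal_im, sub_zero]
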